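/- The configuration A ∠_i^j B, B ∠_k^l C, A ∠_s^t C (all distinct-position relations) is realizable by o-points if and only if there exist u, v, w ∈ ℤ/4m with turn_m(u, -i, s), turn_m(v, -k, j), turn_m(w, -t, l), and triangle_m(u, v, w). -/

import Mathlib

open Real Complex

/-- The OPRA_m sector `[i]_m` as a subset of the circle `ℝ/2πℤ` (`Real.Angle`):
an open arc if `i` is odd, a single point if `i` is even. -/
noncomputable def sector (m : ℕ) (i : ZMod (4*m)) : Set Real.Angle :=
  if Odd i.val then
    (fun r : ℝ => (r : Real.Angle)) ''
      Set.Ioo (2*π*((i.val : ℝ)-1)/(4*m)) (2*π*((i.val : ℝ)+1)/(4*m))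
  else {((2*π*(i.val : ℝ)/(4*m) : ℝ) : Real.Angle)}

/-- The direction angle `φ_XY` of the vector `Y - X`, as an element of the circle. -/
noncomputable def phiAngle (X Y : ℂ) : Real.Angle := (Complex.arg (Y - X) : Real.Angle)

/-- An o-point: a point of the plane (modeled as `ℂ`) with an orientation. -/
abbrev OPoint := ℂ × Real.Angle

/-- The distinct-position OPRA_m base relation `A ∠_i^j B`. -/
noncomputable def oprarel (m : ℕ) (i j : ZMod (4*m)) (A B : OPoint) : Prop :=
  A.1 ≠ B.1 ∧ phiAngle A.1 B.1 - A.2 ∈ sector m i ∧ phiAngle B.1 A.1 - B.2 ∈ sector m j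

/-- The same-position OPRA_m base relation `A ∠i B`. -/
noncomputable def oprasame (m : ℕ) (i : ZMod (4*m)) (A B : OPoint) : Prop :=
  A.1 = B.1 ∧ B.2 - A.2 ∈ sector m i

/-- `turn_m(i,j,k)`. -/
def turnRel (m : ℕ) (i j k : ZMod (4*m)) : Prop :=
  if Odd i.val ∧ Odd j.val then i + j + k = 0 ∨ i + j + k = 1 ∨ i + j + k = -1
  else i + j + k = 0

/-- `sign_m(i)`. -/
def signm (m : ℕ) (i : ZMod (4*m)) : ℤ :=
  if i.val = 0 ∨ i.val = 2*m then 0 else if i.val < 2*m then 1 else -1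

/-- `triangle_m(i,j,k)`. -/
def triRel (m : ℕ) (i j k : ZMod (4*m)) : Prop :=
  turnRel m i j (k - ((2*m : ℕ) : ZMod (4*m))) ∧
  ¬(i = ((2*m : ℕ) : ZMod (4*m)) ∧ j = ((2*m : ℕ) : ZMod (4*m)) ∧ k = ((2*m : ℕ) : ZMod (4*m))) ∧
  signm m i = signm m j ∧ signm m j = signm m k

/-- The sign of an angle, where both `0` and `π` get sign `0`. -/
noncomputable def angsign (θ : Real.Angle) : ℤ := by
  classical exact if θ.toReal = 0 ∨ θ.toReal = π then 0 else if 0 < θ.toReal then 1 else -1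

/-! ### Auxiliary lemmas -/

namespace Stmt17

theorem val_cast_self {m : ℕ} (hm : 1 ≤ m) (a : ZMod (4*m)) : ((a.val : ℕ) : ZMod (4*m)) = a := by
  haveI : NeZero (4*m) := ⟨by omega⟩
  simp [ZMod.natCast_val, ZMod.cast_id]

theorem mem_sector {m : ℕ} (hm : 1 ≤ m) (i : ZMod (4*m)) (θ : Real.Angle) :
    θ ∈ sector m i ↔ ∃ e : ℝ, |e| < 1 ∧ (¬ Odd i.val → e = 0) ∧
      θ = ((2*π*((i.val:ℝ)+e)/(4*m) : ℝ) : Real.Angle) := by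
  have hπ := Real.pi_pos
  have hmR : (1:ℝ) ≤ (m:ℝ) := by exact_mod_cast hm
  have hN : (0:ℝ) < 4*(m:ℝ) := by linarith
  unfold sector
  by_cases hodd : Odd i.val
  · rw [if_pos hodd]
    constructor
    · rintro ⟨r, ⟨h1, h2⟩, rfl⟩
      refine ⟨r*(4*(m:ℝ))/(2*π) - i.val, ?_, fun h => absurd hodd h, ?_⟩
      · have h1' : 2*π*((i.val:ℝ)-1) < r*(4*(m:ℝ)) := by
          have := (div_lt_iff₀ hN).mp h1; linarith
        have h2' : r*(4*(m:ℝ)) < 2*π*((i.val:ℝ)+1) := by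
          have := (lt_div_iff₀ hN).mp h2; linarith
        rw [abs_lt]
        constructor
        · rw [lt_sub_iff_add_lt]
          rw [lt_div_iff₀ (by linarith : (0:ℝ) < 2*π)]
          nlinarith
        · rw [sub_lt_iff_lt_add]
          rw [div_lt_iff₀ (by linarith : (0:ℝ) < 2*π)]
          nlinarith
      · congr 1
        field_simp
        ring
    · rintro ⟨e, he, -, rfl⟩
      rw [abs_lt] at he
      refine ⟨2*π*((i.val:ℝ)+e)/(4*(m:ℝ)), ⟨?_, ?_⟩, rfl⟩
      · rw [div_lt_div_iff₀ hN hN]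
        nlinarith [mul_pos (mul_pos (by linarith : (0:ℝ) < 2*π) hN) (by linarith : (0:ℝ) < e+1)]
      · rw [div_lt_div_iff₀ hN hN]
        nlinarith [mul_pos (mul_pos (by linarith : (0:ℝ) < 2*π) hN) (by linarith : (0:ℝ) < 1-e)]
  · rw [if_neg hodd]
    simp only [Set.mem_singleton_iff]
    constructor
    · rintro rfl
      exact ⟨0, by norm_num, fun _ => rfl, by norm_num⟩
    · rintro ⟨e, he, hpar, rfl⟩
      rw [hpar hodd]
      norm_num

theorem coe_div_eq {m : ℕ} (hm : 1 ≤ m) {a b : ℝ} (n : ℤ) (h : a - b = 4*m*n) :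
    ((2*π*a/(4*m) : ℝ) : Real.Angle) = ((2*π*b/(4*m) : ℝ) : Real.Angle) := by
  have hm0 : (m:ℝ) ≠ 0 := by
    have : (1:ℝ) ≤ (m:ℝ) := by exact_mod_cast hm
    linarith
  rw [Real.Angle.angle_eq_iff_two_pi_dvd_sub]
  refine ⟨n, ?_⟩
  rw [show 2*π*a/(4*(m:ℝ)) - 2*π*b/(4*(m:ℝ)) = 2*π*(a-b)/(4*(m:ℝ)) from by ring, h]
  field_simp

theorem coe_div_eq_zero_iff {m : ℕ} (hm : 1 ≤ m) {a : ℝ} :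
    ((2*π*a/(4*m) : ℝ) : Real.Angle) = 0 ↔ ∃ n : ℤ, a = 4*m*n := by
  have hπ := Real.pi_pos
  have hmR : (1:ℝ) ≤ (m:ℝ) := by exact_mod_cast hm
  have h4 : (4*(m:ℝ)) ≠ 0 := by linarith
  have h2π : (2*π : ℝ) ≠ 0 := by linarith
  constructor
  · intro h
    rw [show (0 : Real.Angle) = ((0:ℝ) : Real.Angle) from (Real.Angle.coe_zero).symm] at h
    rw [Real.Angle.angle_eq_iff_two_pi_dvd_sub] at h
    obtain ⟨k, hk⟩ := h
    rw [sub_zero, div_eq_iff h4] at hk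
    rw [show 2*π*(k:ℝ)*(4*(m:ℝ)) = 2*π*((k:ℝ)*(4*(m:ℝ))) from by ring] at hk
    have := mul_left_cancel₀ h2π hk
    exact ⟨k, by linarith⟩
  · rintro ⟨n, rfl⟩
    rw [show (0 : Real.Angle) = ((0:ℝ) : Real.Angle) from (Real.Angle.coe_zero).symm]
    rw [Real.Angle.angle_eq_iff_two_pi_dvd_sub]
    exact ⟨n, by field_simp; ring⟩

theorem zmod_sum_eq {m : ℕ} (hm : 1 ≤ m) (i j k : ZMod (4*m)) (d : ℤ) :
    i + j + k = (d : ZMod (4*m)) ↔ ∃ n : ℤ, ((i.val:ℤ) + j.val + k.val) = 4*m*n + d := by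
  haveI : NeZero (4*m) := ⟨by omega⟩
  have hval : ∀ a : ZMod (4*m), (((a.val:ℤ)) : ZMod (4*m)) = a := fun a => by
    push_cast
    rw [ZMod.natCast_val, ZMod.cast_id]
  constructor
  · intro h
    have h' : ((((i.val:ℤ) + j.val + k.val : ℤ)) : ZMod (4*m)) = ((d:ℤ) : ZMod (4*m)) := by
      push_cast [hval]
      exact h
    have h2 := (ZMod.intCast_eq_intCast_iff _ _ _).mp h'
    obtain ⟨c, hc⟩ := Int.ModEq.dvd h2
    exact ⟨-c, by push_cast at hc ⊢; linarith⟩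
  · rintro ⟨n, hn⟩
    have h' : i + j + k = ((((i.val:ℤ) + j.val + k.val : ℤ)) : ZMod (4*m)) := by
      push_cast [hval]; ring
    rw [h', hn]
    have h0 : ((4*m : ℕ) : ZMod (4*m)) = 0 := ZMod.natCast_self _
    push_cast at h0 ⊢
    rw [h0]
    ring

theorem turn_iff {m : ℕ} (hm : 1 ≤ m) (i j k : ZMod (4*m)) :
    turnRel m i j k ↔ ∃ n d : ℤ, ((i.val:ℤ) + j.val + k.val) = 4*m*n + d ∧
      (d = 0 ∨ (Odd i.val ∧ Odd j.val ∧ Odd k.val ∧ (d = 1 ∨ d = -1))) := by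
  unfold turnRel
  split_ifs with h
  · constructor
    · rintro (h0 | h1 | hm1)
      · obtain ⟨n, hn⟩ := (zmod_sum_eq hm i j k 0).mp (by rw [h0]; norm_num)
        exact ⟨n, 0, hn, Or.inl rfl⟩
      · obtain ⟨n, hn⟩ := (zmod_sum_eq hm i j k 1).mp (by rw [h1]; norm_num)
        refine ⟨n, 1, hn, Or.inr ⟨h.1, h.2, ?_, Or.inl rfl⟩⟩
        obtain ⟨hx, hy⟩ := h
        rw [Nat.odd_iff] at hx hy ⊢
        obtain ⟨t, ht⟩ : ∃ t:ℤ, 4*(m:ℤ)*n = 4*t := ⟨m*n, by ring⟩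
        rw [ht] at hn
        omega
      · obtain ⟨n, hn⟩ := (zmod_sum_eq hm i j k (-1)).mp (by rw [hm1]; norm_num)
        refine ⟨n, -1, hn, Or.inr ⟨h.1, h.2, ?_, Or.inr rfl⟩⟩
        obtain ⟨hx, hy⟩ := h
        rw [Nat.odd_iff] at hx hy ⊢
        obtain ⟨t, ht⟩ : ∃ t:ℤ, 4*(m:ℤ)*n = 4*t := ⟨m*n, by ring⟩
        rw [ht] at hn
        omega
    · rintro ⟨n, d, hn, hd⟩
      rcases hd with rfl | ⟨hx, hy, hz, hd⟩
      · exact Or.inl (by simpa using (zmod_sum_eq hm i j k 0).mpr ⟨n, hn⟩)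
      · rcases hd with rfl | rfl
        · exact Or.inr (Or.inl (by simpa using (zmod_sum_eq hm i j k 1).mpr ⟨n, hn⟩))
        · exact Or.inr (Or.inr (by simpa using (zmod_sum_eq hm i j k (-1)).mpr ⟨n, hn⟩))
  · constructor
    · intro h0
      obtain ⟨n, hn⟩ := (zmod_sum_eq hm i j k 0).mp (by rw [h0]; norm_num)
      exact ⟨n, 0, hn, Or.inl rfl⟩
    · rintro ⟨n, d, hn, hd⟩
      rcases hd with rfl | ⟨hx, hy, _, _⟩
      · simpa using (zmod_sum_eq hm i j k 0).mpr ⟨n, hn⟩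
      · exact absurd ⟨hx, hy⟩ h

theorem turn_of_sum {m : ℕ} (hm : 1 ≤ m) {i j k : ZMod (4*m)} {α β γ : Real.Angle}
    (ha : α ∈ sector m i) (hb : β ∈ sector m j) (hc : γ ∈ sector m k)
    (h : α + β + γ = 0) : turnRel m i j k := by
  have hπ := Real.pi_pos
  rw [mem_sector hm] at ha hb hc
  obtain ⟨e, he, hie, rfl⟩ := ha
  obtain ⟨f, hf, hjf, rfl⟩ := hb
  obtain ⟨g, hg, hkg, rfl⟩ := hc
  rw [← Real.Angle.coe_add, ← Real.Angle.coe_add] at h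
  rw [show 2*π*((i.val:ℝ)+e)/(4*(m:ℝ)) + 2*π*((j.val:ℝ)+f)/(4*(m:ℝ)) + 2*π*((k.val:ℝ)+g)/(4*(m:ℝ))
      = 2*π*((((i.val:ℝ)+(j.val:ℝ)+(k.val:ℝ))+(e+f+g)))/(4*(m:ℝ)) from by ring] at h
  obtain ⟨n, hn⟩ := (coe_div_eq_zero_iff hm).mp h
  set M : ℤ := 4*m*n - ((i.val:ℤ) + j.val + k.val) with hMdef
  have hMr : (M:ℝ) = e+f+g := by
    rw [hMdef]
    have hnR : ((i.val:ℝ)+(j.val:ℝ)+(k.val:ℝ))+(e+f+g) = 4*(m:ℝ)*(n:ℝ) := by exact_mod_cast hn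
    push_cast
    linarith
  rw [turn_iff hm]
  refine ⟨n, -M, by push_cast; ring, ?_⟩
  obtain ⟨t, ht⟩ : ∃ t:ℤ, (4:ℤ)*m*n = 4*t := ⟨m*n, by ring⟩
  have hMt : M = 4*t - ((i.val:ℤ)+j.val+k.val) := by rw [hMdef, ht]
  rw [abs_lt] at he hf hg
  by_cases hx : Odd i.val <;> by_cases hy : Odd j.val <;> by_cases hz : Odd k.val
  · -- all odd
    have px := Nat.odd_iff.mp hx
    have py := Nat.odd_iff.mp hy
    have pz := Nat.odd_iff.mp hz
    have l1 : (M:ℝ) < 3 := by rw [hMr]; linarith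
    have l2 : (-3:ℝ) < (M:ℝ) := by rw [hMr]; linarith
    have li1 : M < 3 := by exact_mod_cast l1
    have li2 : (-3:ℤ) < M := by exact_mod_cast l2
    exact Or.inr ⟨hx, hy, hz, by omega⟩
  · have pg : g = 0 := hkg hz
    have px := Nat.odd_iff.mp hx
    have py := Nat.odd_iff.mp hy
    have pz : k.val % 2 = 0 := by rw [Nat.odd_iff] at hz; omega
    have l1 : (M:ℝ) < 2 := by rw [hMr, pg]; linarith
    have l2 : (-2:ℝ) < (M:ℝ) := by rw [hMr, pg]; linarith
    have li1 : M < 2 := by exact_mod_cast l1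
    have li2 : (-2:ℤ) < M := by exact_mod_cast l2
    left; omega
  · have pf : f = 0 := hjf hy
    have px := Nat.odd_iff.mp hx
    have py : j.val % 2 = 0 := by rw [Nat.odd_iff] at hy; omega
    have pz := Nat.odd_iff.mp hz
    have l1 : (M:ℝ) < 2 := by rw [hMr, pf]; linarith
    have l2 : (-2:ℝ) < (M:ℝ) := by rw [hMr, pf]; linarith
    have li1 : M < 2 := by exact_mod_cast l1
    have li2 : (-2:ℤ) < M := by exact_mod_cast l2
    left; omega
  · have pf : f = 0 := hjf hy
    have pg : g = 0 := hkg hz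
    have l1 : (M:ℝ) < 1 := by rw [hMr, pf, pg]; linarith
    have l2 : (-1:ℝ) < (M:ℝ) := by rw [hMr, pf, pg]; linarith
    have li1 : M < 1 := by exact_mod_cast l1
    have li2 : (-1:ℤ) < M := by exact_mod_cast l2
    left; omega
  · have pe : e = 0 := hie hx
    have px : i.val % 2 = 0 := by rw [Nat.odd_iff] at hx; omega
    have py := Nat.odd_iff.mp hy
    have pz := Nat.odd_iff.mp hz
    have l1 : (M:ℝ) < 2 := by rw [hMr, pe]; linarith
    have l2 : (-2:ℝ) < (M:ℝ) := by rw [hMr, pe]; linarith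
    have li1 : M < 2 := by exact_mod_cast l1
    have li2 : (-2:ℤ) < M := by exact_mod_cast l2
    left; omega
  · have pe : e = 0 := hie hx
    have pg : g = 0 := hkg hz
    have l1 : (M:ℝ) < 1 := by rw [hMr, pe, pg]; linarith
    have l2 : (-1:ℝ) < (M:ℝ) := by rw [hMr, pe, pg]; linarith
    have li1 : M < 1 := by exact_mod_cast l1
    have li2 : (-1:ℤ) < M := by exact_mod_cast l2
    left; omega
  · have pe : e = 0 := hie hx
    have pf : f = 0 := hjf hy
    have l1 : (M:ℝ) < 1 := by rw [hMr, pe, pf]; linarith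
    have l2 : (-1:ℝ) < (M:ℝ) := by rw [hMr, pe, pf]; linarith
    have li1 : M < 1 := by exact_mod_cast l1
    have li2 : (-1:ℤ) < M := by exact_mod_cast l2
    left; omega
  · have pe : e = 0 := hie hx
    have pf : f = 0 := hjf hy
    have pg : g = 0 := hkg hz
    have l0 : (M:ℝ) = 0 := by rw [hMr, pe, pf, pg]; ring
    have li0 : M = 0 := by exact_mod_cast l0
    left; omega

theorem sum_of_turn {m : ℕ} (hm : 1 ≤ m) {i j k : ZMod (4*m)} {α : Real.Angle}
    (h : turnRel m i j k) (ha : α ∈ sector m i) :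
    ∃ β γ : Real.Angle, β ∈ sector m j ∧ γ ∈ sector m k ∧ α + β + γ = 0 := by
  have hπ := Real.pi_pos
  rw [turn_iff hm] at h
  obtain ⟨n, d, hn, hd⟩ := h
  rw [mem_sector hm] at ha
  obtain ⟨e, he, hie, rfl⟩ := ha
  have hd1 : (-1:ℝ) ≤ (d:ℝ) ∧ (d:ℝ) ≤ 1 := by
    rcases hd with rfl | ⟨_,_,_, rfl|rfl⟩ <;> norm_num
  rw [abs_lt] at he
  by_cases hy : Odd j.val <;> by_cases hz : Odd k.val
  · refine ⟨((2*π*((j.val:ℝ) + (-e/2 - (d:ℝ)/2))/(4*m) : ℝ) : Real.Angle),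
            ((2*π*((k.val:ℝ) + (-e/2 - (d:ℝ)/2))/(4*m) : ℝ) : Real.Angle), ?_, ?_, ?_⟩
    · rw [mem_sector hm]
      exact ⟨-e/2 - (d:ℝ)/2, by rw [abs_lt]; constructor <;> linarith [hd1.1, hd1.2],
        fun hh => absurd hy hh, rfl⟩
    · rw [mem_sector hm]
      exact ⟨-e/2 - (d:ℝ)/2, by rw [abs_lt]; constructor <;> linarith [hd1.1, hd1.2],
        fun hh => absurd hz hh, rfl⟩
    · rw [← Real.Angle.coe_add, ← Real.Angle.coe_add,
        show 2*π*((i.val:ℝ)+e)/(4*(m:ℝ)) + 2*π*((j.val:ℝ) + (-e/2 - (d:ℝ)/2))/(4*(m:ℝ))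
          + 2*π*((k.val:ℝ) + (-e/2 - (d:ℝ)/2))/(4*(m:ℝ))
          = 2*π*(((i.val:ℝ)+(j.val:ℝ)+(k.val:ℝ)) - (d:ℝ))/(4*(m:ℝ)) from by ring]
      exact (coe_div_eq_zero_iff hm).mpr ⟨n, by
        have hnR : ((i.val:ℝ)+(j.val:ℝ)+(k.val:ℝ)) = 4*(m:ℝ)*(n:ℝ) + (d:ℝ) := by exact_mod_cast hn
        push_cast
        linarith⟩
  · have hd0 : d = 0 := by
      rcases hd with rfl | ⟨_, _, hzo, _⟩
      · rfl
      · exact absurd hzo hz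
    subst hd0
    refine ⟨((2*π*((j.val:ℝ) + (-e))/(4*m) : ℝ) : Real.Angle),
            ((2*π*((k.val:ℝ) + 0)/(4*m) : ℝ) : Real.Angle), ?_, ?_, ?_⟩
    · rw [mem_sector hm]
      exact ⟨-e, by rw [abs_lt]; constructor <;> linarith, fun hh => absurd hy hh, rfl⟩
    · rw [mem_sector hm]
      exact ⟨0, by norm_num, fun _ => rfl, rfl⟩
    · rw [← Real.Angle.coe_add, ← Real.Angle.coe_add,
        show 2*π*((i.val:ℝ)+e)/(4*(m:ℝ)) + 2*π*((j.val:ℝ) + (-e))/(4*(m:ℝ))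
          + 2*π*((k.val:ℝ) + 0)/(4*(m:ℝ))
          = 2*π*(((i.val:ℝ)+(j.val:ℝ)+(k.val:ℝ)))/(4*(m:ℝ)) from by ring]
      exact (coe_div_eq_zero_iff hm).mpr ⟨n, by
        have hnR : ((i.val:ℝ)+(j.val:ℝ)+(k.val:ℝ)) = 4*(m:ℝ)*(n:ℝ) + 0 := by exact_mod_cast hn
        push_cast
        linarith⟩
  · have hd0 : d = 0 := by
      rcases hd with rfl | ⟨_, hyo, _, _⟩
      · rfl
      · exact absurd hyo hy
    subst hd0
    refine ⟨((2*π*((j.val:ℝ) + 0)/(4*m) : ℝ) : Real.Angle),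
            ((2*π*((k.val:ℝ) + (-e))/(4*m) : ℝ) : Real.Angle), ?_, ?_, ?_⟩
    · rw [mem_sector hm]
      exact ⟨0, by norm_num, fun _ => rfl, rfl⟩
    · rw [mem_sector hm]
      exact ⟨-e, by rw [abs_lt]; constructor <;> linarith, fun hh => absurd hz hh, rfl⟩
    · rw [← Real.Angle.coe_add, ← Real.Angle.coe_add,
        show 2*π*((i.val:ℝ)+e)/(4*(m:ℝ)) + 2*π*((j.val:ℝ) + 0)/(4*(m:ℝ))
          + 2*π*((k.val:ℝ) + (-e))/(4*(m:ℝ))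
          = 2*π*(((i.val:ℝ)+(j.val:ℝ)+(k.val:ℝ)))/(4*(m:ℝ)) from by ring]
      exact (coe_div_eq_zero_iff hm).mpr ⟨n, by
        have hnR : ((i.val:ℝ)+(j.val:ℝ)+(k.val:ℝ)) = 4*(m:ℝ)*(n:ℝ) + 0 := by exact_mod_cast hn
        push_cast
        linarith⟩
  · have hd0 : d = 0 := by
      rcases hd with rfl | ⟨_, hyo, _, _⟩
      · rfl
      · exact absurd hyo hy
    subst hd0
    have he0 : e = 0 := by
      by_cases hx : Odd i.val
      · exfalso
        have px := Nat.odd_iff.mp hx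
        have py : j.val % 2 = 0 := by rw [Nat.odd_iff] at hy; omega
        have pz : k.val % 2 = 0 := by rw [Nat.odd_iff] at hz; omega
        obtain ⟨t, ht⟩ : ∃ t:ℤ, 4*(m:ℤ)*n = 4*t := ⟨m*n, by ring⟩
        rw [ht] at hn
        omega
      · exact hie hx
    subst he0
    refine ⟨((2*π*((j.val:ℝ) + 0)/(4*m) : ℝ) : Real.Angle),
            ((2*π*((k.val:ℝ) + 0)/(4*m) : ℝ) : Real.Angle), ?_, ?_, ?_⟩
    · rw [mem_sector hm]
      exact ⟨0, by norm_num, fun _ => rfl, rfl⟩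
    · rw [mem_sector hm]
      exact ⟨0, by norm_num, fun _ => rfl, rfl⟩
    · rw [← Real.Angle.coe_add, ← Real.Angle.coe_add,
        show 2*π*((i.val:ℝ)+0)/(4*(m:ℝ)) + 2*π*((j.val:ℝ) + 0)/(4*(m:ℝ))
          + 2*π*((k.val:ℝ) + 0)/(4*(m:ℝ))
          = 2*π*(((i.val:ℝ)+(j.val:ℝ)+(k.val:ℝ)))/(4*(m:ℝ)) from by ring]
      exact (coe_div_eq_zero_iff hm).mpr ⟨n, by
        have hnR : ((i.val:ℝ)+(j.val:ℝ)+(k.val:ℝ)) = 4*(m:ℝ)*(n:ℝ) + 0 := by exact_mod_cast hn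
        push_cast
        linarith⟩

theorem neg_mem {m : ℕ} (hm : 1 ≤ m) {i : ZMod (4*m)} {θ : Real.Angle}
    (h : θ ∈ sector m i) : -θ ∈ sector m (-i) := by
  haveI : NeZero (4*m) := ⟨by omega⟩
  rw [mem_sector hm] at h ⊢
  obtain ⟨e, he, hie, rfl⟩ := h
  by_cases h0 : i = 0
  · subst h0
    have he0 : e = 0 := hie (by simp [ZMod.val_zero, Nat.odd_iff])
    subst he0
    refine ⟨0, by norm_num, fun _ => rfl, ?_⟩
    norm_num
  · haveI : NeZero i := ⟨h0⟩
    have hneg : (-i).val = 4*m - i.val := ZMod.val_neg_of_ne_zero i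
    have hlt : i.val < 4*m := ZMod.val_lt i
    have hpos : 0 < i.val := by
      rcases Nat.eq_zero_or_pos i.val with h' | h'
      · exfalso; apply h0; rw [← val_cast_self hm i, h']; norm_num
      · exact h'
    refine ⟨-e, by rwa [abs_neg], ?_, ?_⟩
    · intro hodd'
      have hie' : ¬ Odd i.val := by
        rw [hneg] at hodd'
        rw [Nat.odd_iff] at hodd' ⊢
        omega
      rw [hie hie']
      norm_num
    · rw [hneg, ← Real.Angle.coe_neg,
        show -(2*π*((i.val:ℝ)+e)/(4*(m:ℝ))) = 2*π*(-((i.val:ℝ)+e))/(4*(m:ℝ)) from by ring]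
      exact coe_div_eq hm (-1) (by push_cast [Nat.cast_sub hlt.le]; ring)

theorem mod2m {m z : ℕ} (hm : 1 ≤ m) (hz : z < 4*m) :
    (z + 2*m) % (4*m) = if z < 2*m then z + 2*m else z - 2*m := by
  split_ifs with h
  · exact Nat.mod_eq_of_lt (by omega)
  · rw [show z + 2*m = (z - 2*m) + 1*(4*m) from by omega, Nat.add_mul_mod_self_right]
    exact Nat.mod_eq_of_lt (by omega)

theorem sub2m_eq {m : ℕ} (hm : 1 ≤ m) (w : ZMod (4*m)) :
    w - ((2*m:ℕ) : ZMod (4*m)) = w + ((2*m:ℕ) : ZMod (4*m)) := by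
  have hself : ((2*m:ℕ) : ZMod (4*m)) + ((2*m:ℕ) : ZMod (4*m)) = 0 := by
    rw [← Nat.cast_add, show 2*m+2*m = 4*m from by ring]
    exact ZMod.natCast_self _
  rw [sub_eq_add_neg, neg_eq_of_add_eq_zero_right hself]

theorem sub2m_val {m : ℕ} (hm : 1 ≤ m) (w : ZMod (4*m)) :
    (w - ((2*m:ℕ) : ZMod (4*m))).val = (w.val + 2*m) % (4*m) := by
  haveI : NeZero (4*m) := ⟨by omega⟩
  rw [sub2m_eq hm, ZMod.val_add, ZMod.val_cast_of_lt (by omega : 2*m < 4*m)]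

theorem sub_pi_mem {m : ℕ} (hm : 1 ≤ m) {i : ZMod (4*m)} {θ : Real.Angle}
    (h : θ ∈ sector m i) : θ - ((π:ℝ) : Real.Angle) ∈ sector m (i - ((2*m:ℕ) : ZMod (4*m))) := by
  haveI : NeZero (4*m) := ⟨by omega⟩
  have hπ := Real.pi_pos
  have hmR : (1:ℝ) ≤ (m:ℝ) := by exact_mod_cast hm
  have hm0 : (m:ℝ) ≠ 0 := by linarith
  have hlt : i.val < 4*m := ZMod.val_lt i
  rw [mem_sector hm] at h ⊢
  obtain ⟨e, he, hie, rfl⟩ := h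
  rw [sub2m_val hm, mod2m hm hlt]
  refine ⟨e, he, ?_, ?_⟩
  · intro hodd
    apply hie
    intro hx
    apply hodd
    rw [Nat.odd_iff] at hx ⊢
    split_ifs <;> omega
  · rw [← Real.Angle.coe_sub,
      show 2*π*((i.val:ℝ)+e)/(4*(m:ℝ)) - π = 2*π*(((i.val:ℝ)+e) - 2*m)/(4*(m:ℝ)) from by
        field_simp; ring]
    split_ifs with hcase
    · exact coe_div_eq hm (-1) (by push_cast; ring)
    · exact coe_div_eq hm 0 (by push_cast [Nat.cast_sub (by omega : 2*m ≤ i.val)]; ring)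

theorem angsign_eq {m : ℕ} (hm : 1 ≤ m) {i : ZMod (4*m)} {θ : Real.Angle}
    (h : θ ∈ sector m i) : angsign θ = signm m i := by
  have hπ := Real.pi_pos
  have hmR : (1:ℝ) ≤ (m:ℝ) := by exact_mod_cast hm
  haveI : NeZero (4*m) := ⟨by omega⟩
  rw [mem_sector hm] at h
  obtain ⟨e, he, hie, rfl⟩ := h
  rw [abs_lt] at he
  have hlt : i.val < 4*m := ZMod.val_lt i
  unfold angsign signm
  rcases Nat.lt_or_ge i.val (2*m) with hcase | hcase
  · rcases Nat.eq_zero_or_pos i.val with h0 | h0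
    · have he0 : e = 0 := hie (by rw [h0]; simp [Nat.odd_iff])
      rw [h0, he0]
      have hval : ((2*π*(((0:ℕ):ℝ)+0)/(4*(m:ℝ)) : ℝ) : Real.Angle) = ((0:ℝ) : Real.Angle) := by
        norm_num
      rw [hval, show ((0:ℝ) : Real.Angle) = (0 : Real.Angle) from Real.Angle.coe_zero]
      rw [Real.Angle.toReal_zero]
      simp
    · -- 0 < i.val < 2m : sign 1
      have hx1 : (1:ℝ) ≤ (i.val:ℝ) := by exact_mod_cast h0
      have hx2 : (i.val:ℝ) ≤ 2*(m:ℝ) - 1 := by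
        have : i.val ≤ 2*m - 1 := by omega
        have := (Nat.cast_le (α := ℝ)).mpr this
        push_cast [Nat.cast_sub (by omega : 1 ≤ 2*m)] at this
        linarith
      have hr1 : 0 < 2*π*((i.val:ℝ)+e)/(4*(m:ℝ)) := by
        apply div_pos
        · nlinarith
        · linarith
      have hr2 : 2*π*((i.val:ℝ)+e)/(4*(m:ℝ)) < π := by
        rw [div_lt_iff₀ (by linarith : (0:ℝ) < 4*(m:ℝ))]
        nlinarith
      have htr : ((2*π*((i.val:ℝ)+e)/(4*(m:ℝ)) : ℝ) : Real.Angle).toReal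
          = 2*π*((i.val:ℝ)+e)/(4*(m:ℝ)) :=
        Real.Angle.toReal_coe_eq_self_iff.mpr ⟨by linarith, by linarith⟩
      rw [htr]
      rw [if_neg (by push_neg; constructor <;> intro hcc <;> linarith), if_pos hr1]
      rw [if_neg (by omega), if_pos hcase]
  · rcases Nat.eq_or_lt_of_le hcase with h2m | h2m
    · -- i.val = 2m : sign 0
      have he0 : e = 0 := hie (by rw [← h2m]; rw [Nat.odd_iff]; omega)
      have hval : ((2*π*((i.val:ℝ)+e)/(4*(m:ℝ)) : ℝ) : Real.Angle) = ((π:ℝ) : Real.Angle) := by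
        rw [he0, ← h2m]
        congr 1
        push_cast
        field_simp
        ring
      rw [hval, Real.Angle.toReal_pi]
      rw [if_pos (Or.inr rfl), if_pos (Or.inr h2m.symm)]
    · -- 2m < i.val < 4m : sign -1
      have hx1 : 2*(m:ℝ) + 1 ≤ (i.val:ℝ) := by
        have : 2*m + 1 ≤ i.val := by omega
        have := (Nat.cast_le (α := ℝ)).mpr this
        push_cast at this
        linarith
      have hx2 : (i.val:ℝ) ≤ 4*(m:ℝ) - 1 := by
        have : i.val ≤ 4*m - 1 := by omega
        have := (Nat.cast_le (α := ℝ)).mpr this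
        push_cast [Nat.cast_sub (by omega : 1 ≤ 4*m)] at this
        linarith
      have hr1 : π < 2*π*((i.val:ℝ)+e)/(4*(m:ℝ)) := by
        rw [lt_div_iff₀ (by linarith : (0:ℝ) < 4*(m:ℝ))]
        nlinarith
      have hr2 : 2*π*((i.val:ℝ)+e)/(4*(m:ℝ)) < 2*π := by
        rw [div_lt_iff₀ (by linarith : (0:ℝ) < 4*(m:ℝ))]
        nlinarith
      have hcoe : ((2*π*((i.val:ℝ)+e)/(4*(m:ℝ)) : ℝ) : Real.Angle)
          = ((2*π*((i.val:ℝ)+e)/(4*(m:ℝ)) - 2*π : ℝ) : Real.Angle) := by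
        rw [Real.Angle.coe_sub, Real.Angle.coe_two_pi, sub_zero]
      have htr : ((2*π*((i.val:ℝ)+e)/(4*(m:ℝ)) - 2*π : ℝ) : Real.Angle).toReal
          = 2*π*((i.val:ℝ)+e)/(4*(m:ℝ)) - 2*π :=
        Real.Angle.toReal_coe_eq_self_iff.mpr ⟨by linarith, by linarith⟩
      rw [hcoe, htr]
      rw [if_neg (by push_neg; constructor <;> intro hcc <;> linarith),
        if_neg (by linarith)]
      rw [if_neg (by omega), if_neg (by omega)]

theorem exists_sector {m : ℕ} (hm : 1 ≤ m) (θ : Real.Angle) :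
    ∃ i : ZMod (4*m), θ ∈ sector m i := by
  have hπ := Real.pi_pos
  have hmR : (1:ℝ) ≤ (m:ℝ) := by exact_mod_cast hm
  haveI : NeZero (4*m) := ⟨by omega⟩
  set r : ℝ := if θ.toReal < 0 then θ.toReal + 2*π else θ.toReal with hr
  have hr0 : 0 ≤ r ∧ r < 2*π := by
    rw [hr]; split_ifs with hneg
    · exact ⟨by linarith [Real.Angle.neg_pi_lt_toReal θ], by linarith⟩
    · exact ⟨by linarith [not_lt.mp hneg], by linarith [Real.Angle.toReal_le_pi θ]⟩
  have hrθ : ((r:ℝ) : Real.Angle) = θ := by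
    rw [hr]; split_ifs
    · rw [Real.Angle.coe_add, Real.Angle.coe_two_pi, add_zero, Real.Angle.coe_toReal]
    · exact Real.Angle.coe_toReal θ
  set s : ℝ := r * (4*(m:ℝ)) / (2*π) with hs
  have hs0 : 0 ≤ s := by
    apply div_nonneg
    · nlinarith [hr0.1]
    · linarith
  have hsN : s < 4*(m:ℝ) := by
    rw [hs, div_lt_iff₀ (by linarith : (0:ℝ) < 2*π)]
    nlinarith [hr0.2]
  have hrs : r = 2*π*s/(4*(m:ℝ)) := by
    rw [hs]; field_simp
  set q : ℕ := ⌊s⌋.toNat with hq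
  have hfl : ((⌊s⌋ : ℤ) : ℝ) = (q:ℝ) := by
    have h := Int.toNat_of_nonneg (Int.floor_nonneg.mpr hs0)
    rw [hq]
    exact_mod_cast h.symm
  have hq1 : (q:ℝ) ≤ s := by rw [← hfl]; exact Int.floor_le s
  have hq2 : s < (q:ℝ) + 1 := by rw [← hfl]; exact Int.lt_floor_add_one s
  have hqN : q < 4*m := by
    have : (q:ℝ) < 4*(m:ℝ) := lt_of_le_of_lt hq1 hsN
    exact_mod_cast this
  by_cases hsq : s = (q:ℝ)
  · refine ⟨(q : ZMod (4*m)), ?_⟩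
    rw [mem_sector hm]
    refine ⟨0, by norm_num, fun _ => rfl, ?_⟩
    rw [ZMod.val_cast_of_lt hqN, ← hrθ, hrs, hsq]
    norm_num
  · by_cases hodd : Odd q
    · refine ⟨(q : ZMod (4*m)), ?_⟩
      rw [mem_sector hm]
      refine ⟨s - q, ?_, fun hh => absurd (by rwa [ZMod.val_cast_of_lt hqN]) hh, ?_⟩
      · rw [abs_lt]
        constructor <;> linarith [lt_of_le_of_ne hq1 (Ne.symm hsq)]
      · rw [ZMod.val_cast_of_lt hqN, ← hrθ, hrs]
        congr 1
        ring
    · have hq1N : q + 1 < 4*m := by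
        rcases Nat.lt_or_ge (q+1) (4*m) with h | h
        · exact h
        · exfalso
          apply hodd
          have : q = 4*m - 1 := by omega
          rw [this, Nat.odd_iff]
          omega
      refine ⟨((q+1 : ℕ) : ZMod (4*m)), ?_⟩
      rw [mem_sector hm]
      refine ⟨s - q - 1, ?_, ?_, ?_⟩
      · rw [abs_lt]
        constructor <;> linarith [lt_of_le_of_ne hq1 (Ne.symm hsq)]
      · intro hh
        exfalso
        apply hh
        rw [ZMod.val_cast_of_lt hq1N, Nat.odd_iff]
        rw [Nat.odd_iff] at hodd
        omega
      · rw [ZMod.val_cast_of_lt hq1N, ← hrθ, hrs]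
        congr 1
        push_cast
        ring


theorem angsign_arg_sub {z w : ℂ} (hz : z ≠ 0) (hw : w ≠ 0) :
    angsign ((z.arg : Real.Angle) - (w.arg : Real.Angle)) =
      (if (z * (starRingEnd ℂ) w).im = 0 then 0
       else if 0 < (z * (starRingEnd ℂ) w).im then 1 else -1) := by
  have hπ := Real.pi_pos
  have hcw : (starRingEnd ℂ) w ≠ 0 := by
    simp only [ne_eq, map_eq_zero]
    exact hw
  have hmul : z * (starRingEnd ℂ) w ≠ 0 := mul_ne_zero hz hcw
  have h1 : (z.arg : Real.Angle) - (w.arg : Real.Angle) = ((z * (starRingEnd ℂ) w).arg : Real.Angle) := by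
    rw [Complex.arg_mul_coe_angle hz hcw, Complex.arg_conj_coe_angle, sub_eq_add_neg]
  rw [h1]
  unfold angsign
  rw [Complex.arg_coe_angle_toReal_eq_arg]
  set ζ := z * (starRingEnd ℂ) w with hζ
  rcases lt_trichotomy ζ.im 0 with him | him | him
  · have harg : ζ.arg < 0 := Complex.arg_neg_iff.mpr him
    rw [if_neg (by push_neg; constructor <;> intro hcc <;> linarith),
      if_neg (by linarith), if_neg (by linarith), if_neg (by linarith)]
  · have hre : ζ.re ≠ 0 := by
      intro hre
      exact hmul (Complex.ext hre him)
    rcases lt_trichotomy ζ.re 0 with h | h | h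
    · rw [if_pos (Or.inr (Complex.arg_eq_pi_iff.mpr ⟨h, him⟩)), if_pos him]
    · exact absurd h hre
    · rw [if_pos (Or.inl (Complex.arg_eq_zero_iff.mpr ⟨le_of_lt h, him⟩)), if_pos him]
  · have harg0 : ζ.arg ≠ 0 := by
      intro hcc
      have := (Complex.arg_eq_zero_iff.mp hcc).2
      linarith
    have hargpi : ζ.arg ≠ π := by
      intro hcc
      have := (Complex.arg_eq_pi_iff.mp hcc).2
      linarith
    have hnneg : 0 ≤ ζ.arg := by
      by_contra hcc
      push_neg at hcc
      have := Complex.arg_neg_iff.mp hcc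
      linarith
    have hpos : 0 < ζ.arg := lt_of_le_of_ne hnneg (Ne.symm harg0)
    rw [if_neg (by push_neg; exact ⟨harg0, hargpi⟩), if_pos hpos,
      if_neg (by linarith), if_pos him]

theorem im_cross₁ (a b c : ℂ) :
    ((b-a) * (starRingEnd ℂ) (c-a)).im = ((c-b) * (starRingEnd ℂ) (a-b)).im := by
  simp only [Complex.mul_im, Complex.sub_re, Complex.sub_im, Complex.conj_re, Complex.conj_im]
  ring

theorem im_cross₂ (a b c : ℂ) :
    ((c-b) * (starRingEnd ℂ) (a-b)).im = ((a-c) * (starRingEnd ℂ) (b-c)).im := by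
  simp only [Complex.mul_im, Complex.sub_re, Complex.sub_im, Complex.conj_re, Complex.conj_im]
  ring

theorem phi_sub_phi (x y z : ℂ) :
    phiAngle x y - phiAngle x z = ((y-x).arg : Real.Angle) - ((z-x).arg : Real.Angle) := rfl

theorem angsign_tri₁ {a b c : ℂ} (hab : a ≠ b) (hbc : b ≠ c) (hac : a ≠ c) :
    angsign (phiAngle a b - phiAngle a c) = angsign (phiAngle b c - phiAngle b a) := by
  have hba : b - a ≠ 0 := sub_ne_zero.mpr hab.symm
  have hca : c - a ≠ 0 := sub_ne_zero.mpr hac.symm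
  have hcb : c - b ≠ 0 := sub_ne_zero.mpr hbc.symm
  have hab' : a - b ≠ 0 := sub_ne_zero.mpr hab
  rw [phi_sub_phi, phi_sub_phi, angsign_arg_sub hba hca, angsign_arg_sub hcb hab',
    im_cross₁ a b c]

theorem angsign_tri₂ {a b c : ℂ} (hab : a ≠ b) (hbc : b ≠ c) (hac : a ≠ c) :
    angsign (phiAngle b c - phiAngle b a) = angsign (phiAngle c a - phiAngle c b) := by
  have hcb : c - b ≠ 0 := sub_ne_zero.mpr hbc.symm
  have hab' : a - b ≠ 0 := sub_ne_zero.mpr hab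
  have hac' : a - c ≠ 0 := sub_ne_zero.mpr hac
  have hbc' : b - c ≠ 0 := sub_ne_zero.mpr hbc
  rw [phi_sub_phi, phi_sub_phi, angsign_arg_sub hcb hab', angsign_arg_sub hac' hbc',
    im_cross₂ a b c]

theorem not_all_pi {a b c : ℂ} (hab : a ≠ b) (hbc : b ≠ c) (hac : a ≠ c)
    (h1 : phiAngle a b - phiAngle a c = ((π:ℝ) : Real.Angle))
    (h2 : phiAngle b c - phiAngle b a = ((π:ℝ) : Real.Angle)) : False := by
  have hba : b - a ≠ 0 := sub_ne_zero.mpr hab.symm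
  have hca : c - a ≠ 0 := sub_ne_zero.mpr hac.symm
  have hcb : c - b ≠ 0 := sub_ne_zero.mpr hbc.symm
  have hab' : a - b ≠ 0 := sub_ne_zero.mpr hab
  have hac' : a - c ≠ 0 := sub_ne_zero.mpr hac
  have hABeq : (b - a).arg = (a - c).arg := by
    apply Complex.arg_coe_angle_eq_iff.mp
    have h1' : ((b-a).arg : Real.Angle) = ((π:ℝ) : Real.Angle) + ((c-a).arg : Real.Angle) :=
      eq_add_of_sub_eq h1
    rw [h1', add_comm, ← Complex.arg_neg_coe_angle hca, show -(c-a) = a - c from by ring]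
  have hBCeq : (c - b).arg = (b - a).arg := by
    apply Complex.arg_coe_angle_eq_iff.mp
    have h2' : ((c-b).arg : Real.Angle) = ((π:ℝ) : Real.Angle) + ((a-b).arg : Real.Angle) :=
      eq_add_of_sub_eq h2
    rw [h2', add_comm, ← Complex.arg_neg_coe_angle hab', show -(a-b) = b - a from by ring]
  have hr1 := (Complex.arg_eq_arg_iff hba hac').mp hABeq
  have hr2 := (Complex.arg_eq_arg_iff hcb hba).mp hBCeq
  -- hr1 : ↑(abs (a-c)) / ↑(abs (b-a)) * (b-a) = a-c
  -- hr2 : ↑(abs (b-a)) / ↑(abs (c-b)) * (c-b) = b-a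
  set q1 : ℂ := ((‖a-c‖ : ℝ) : ℂ) / ((‖b-a‖ : ℝ) : ℂ) with hq1
  set q2 : ℂ := ((‖b-a‖ : ℝ) : ℂ) / ((‖c-b‖ : ℝ) : ℂ) with hq2
  have key : (1 + q2 + q1*q2) * (c - b) = 0 := by
    rw [hq1, hq2]
    rw [hq1] at hr1
    rw [hq2] at hr2
    linear_combination (1 + q1) * hr2 + hr1
  have hq1re : 0 < (‖a-c‖) / (‖b-a‖) :=
    div_pos (norm_pos_iff.mpr hac') (norm_pos_iff.mpr hba)
  have hq2re : 0 < (‖b-a‖) / (‖c-b‖) :=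
    div_pos (norm_pos_iff.mpr hba) (norm_pos_iff.mpr hcb)
  have hcoef : (1 + q2 + q1*q2) ≠ 0 := by
    have : (1 + q2 + q1*q2) = (((1 + (‖b-a‖)/(‖c-b‖)
        + ((‖a-c‖)/(‖b-a‖)) * ((‖b-a‖)/(‖c-b‖)) : ℝ)) : ℂ) := by
      rw [hq1, hq2]
      push_cast
      ring
    rw [this]
    rw [Complex.ofReal_ne_zero]
    positivity
  exact hcb (by
    rcases mul_eq_zero.mp key with h | h
    · exact absurd h hcoef
    · exact h)

theorem tri_pos {ra rb rc : ℝ} (ha1 : 0 < ra) (ha2 : ra < π) (hb1 : 0 < rb) (hb2 : rb < π)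
    (hc1 : 0 < rc) (hc2 : rc < π) (hsum : ra + rb + rc = π) :
    ∃ a b c : ℂ, a ≠ b ∧ b ≠ c ∧ a ≠ c ∧
      phiAngle a b - phiAngle a c = ((ra:ℝ) : Real.Angle) ∧
      phiAngle b c - phiAngle b a = ((rb:ℝ) : Real.Angle) ∧
      phiAngle c a - phiAngle c b = ((rc:ℝ) : Real.Angle) := by
  have hπ := Real.pi_pos
  have hsa := Real.sin_pos_of_pos_of_lt_pi ha1 ha2
  have hsb := Real.sin_pos_of_pos_of_lt_pi hb1 hb2
  have hsc := Real.sin_pos_of_pos_of_lt_pi hc1 hc2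
  set R : ℝ := Real.sin rb / Real.sin rc with hR
  set R' : ℝ := Real.sin ra / Real.sin rc with hR'
  have hRpos : 0 < R := div_pos hsb hsc
  have hR'pos : 0 < R' := div_pos hsa hsc
  have hscc : Real.sin rc = Real.sin ra * Real.cos rb + Real.cos ra * Real.sin rb := by
    rw [show rc = π - (ra + rb) from by linarith, Real.sin_pi_sub, Real.sin_add]
  set C : ℂ := (R:ℂ) * (Complex.cos ((-ra:ℝ):ℂ) + Complex.sin ((-ra:ℝ):ℂ) * Complex.I) with hC
  set D : ℂ := (R':ℂ) * (Complex.cos ((rb:ℝ):ℂ) + Complex.sin ((rb:ℝ):ℂ) * Complex.I) with hD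
  have hargC : Complex.arg C = -ra :=
    Complex.arg_mul_cos_add_sin_mul_I hRpos ⟨by linarith, by linarith⟩
  have hargD : Complex.arg D = rb :=
    Complex.arg_mul_cos_add_sin_mul_I hR'pos ⟨by linarith, by linarith⟩
  have hC0 : C ≠ 0 := by
    have habs : ‖C‖ = R := by
      rw [hC, norm_mul, Complex.norm_real, Real.norm_eq_abs, abs_of_pos hRpos, Complex.norm_cos_add_sin_mul_I,
        mul_one]
    intro hcc
    rw [hcc, norm_zero] at habs
    linarith
  have hD0 : D ≠ 0 := by
    have habs : ‖D‖ = R' := by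
      rw [hD, norm_mul, Complex.norm_real, Real.norm_eq_abs, abs_of_pos hR'pos, Complex.norm_cos_add_sin_mul_I,
        mul_one]
    intro hcc
    rw [hcc, norm_zero] at habs
    linarith
  have hKey : C - 1 = -D := by
    rw [hC, hD]
    rw [← Complex.ofReal_cos, ← Complex.ofReal_sin, ← Complex.ofReal_cos, ← Complex.ofReal_sin]
    apply Complex.ext
    · simp only [Complex.sub_re, Complex.mul_re, Complex.ofReal_re, Complex.ofReal_im,
        Complex.add_re, Complex.mul_im, Complex.I_re, Complex.I_im, Complex.add_im,
        Complex.one_re, Complex.neg_re]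
      rw [Real.cos_neg, Real.sin_neg, hR, hR']
      have hsc0 : Real.sin rc ≠ 0 := ne_of_gt hsc
      field_simp
      all_goals try ring
      all_goals try linarith [hscc]
      all_goals try exact Or.inl trivial
    · simp only [Complex.sub_im, Complex.mul_im, Complex.ofReal_re, Complex.ofReal_im,
        Complex.add_re, Complex.mul_re, Complex.I_re, Complex.I_im, Complex.add_im,
        Complex.one_im, Complex.neg_im]
      rw [Real.cos_neg, Real.sin_neg, hR, hR']
      have hsc0 : Real.sin rc ≠ 0 := ne_of_gt hsc
      field_simp
      all_goals try ring
      all_goals try linarith [hscc]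
      all_goals try exact Or.inl trivial
  have hC1 : C ≠ 1 := by
    intro hcc
    apply hD0
    have : C - 1 = 0 := by rw [hcc]; ring
    rw [hKey] at this
    simpa using this
  refine ⟨0, 1, C, by norm_num, Ne.symm hC1, Ne.symm hC0, ?_, ?_, ?_⟩
  · -- phiAngle 0 1 - phiAngle 0 C = ra
    have p1 : phiAngle 0 1 = ((0:ℝ) : Real.Angle) := by
      unfold phiAngle
      norm_num [Complex.arg_one]
    have p2 : phiAngle 0 C = ((-ra:ℝ) : Real.Angle) := by
      unfold phiAngle
      rw [sub_zero, hargC]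
    rw [p1, p2, ← Real.Angle.coe_sub]
    congr 1
    ring
  · -- phiAngle 1 C - phiAngle 1 0 = rb
    have p3 : phiAngle 1 C = ((rb:ℝ) : Real.Angle) + ((π:ℝ) : Real.Angle) := by
      unfold phiAngle
      rw [hKey, Complex.arg_neg_coe_angle hD0, hargD]
    have p4 : phiAngle 1 0 = ((π:ℝ) : Real.Angle) := by
      unfold phiAngle
      rw [show (0:ℂ) - 1 = -1 from by ring, Complex.arg_neg_one]
    rw [p3, p4]
    abel
  · -- phiAngle C 0 - phiAngle C 1 = rc
    have p5 : phiAngle C 0 = ((-ra:ℝ) : Real.Angle) + ((π:ℝ) : Real.Angle) := by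
      unfold phiAngle
      rw [zero_sub, Complex.arg_neg_coe_angle hC0, hargC]
    have p6 : phiAngle C 1 = ((rb:ℝ) : Real.Angle) := by
      unfold phiAngle
      rw [show (1:ℂ) - C = D from by rw [← neg_neg ((1:ℂ) - C), show -((1:ℂ)-C) = C - 1 from by ring, hKey, neg_neg],
        hargD]
    rw [p5, p6, ← Real.Angle.coe_add, ← Real.Angle.coe_sub]
    congr 1
    linarith

theorem tri_neg {ra rb rc : ℝ} (ha1 : -π < ra) (ha2 : ra < 0) (hb1 : -π < rb) (hb2 : rb < 0)
    (hc1 : -π < rc) (hc2 : rc < 0) (hsum : ra + rb + rc = -π) :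
    ∃ a b c : ℂ, a ≠ b ∧ b ≠ c ∧ a ≠ c ∧
      phiAngle a b - phiAngle a c = ((ra:ℝ) : Real.Angle) ∧
      phiAngle b c - phiAngle b a = ((rb:ℝ) : Real.Angle) ∧
      phiAngle c a - phiAngle c b = ((rc:ℝ) : Real.Angle) := by
  obtain ⟨a, b, c, hab, hbc, hac, e1, e2, e3⟩ :=
    tri_pos (ra := -ra) (rb := -rb) (rc := -rc) (by linarith) (by linarith) (by linarith)
      (by linarith) (by linarith) (by linarith) (by linarith)
  have hphi : ∀ x y : ℂ, phiAngle ((starRingEnd ℂ) x) ((starRingEnd ℂ) y) = -phiAngle x y := by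
    intro x y
    unfold phiAngle
    rw [← map_sub, Complex.arg_conj_coe_angle]
  have hconjinj : ∀ x y : ℂ, (starRingEnd ℂ) x = (starRingEnd ℂ) y → x = y := fun x y h =>
    (starRingEnd ℂ).injective h
  refine ⟨(starRingEnd ℂ) a, (starRingEnd ℂ) b, (starRingEnd ℂ) c,
    fun h => hab (hconjinj _ _ h), fun h => hbc (hconjinj _ _ h), fun h => hac (hconjinj _ _ h),
    ?_, ?_, ?_⟩
  · rw [hphi, hphi, show -phiAngle a b - -phiAngle a c = -(phiAngle a b - phiAngle a c) from by abel,
      e1, ← Real.Angle.coe_neg]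
    congr 1
    ring
  · rw [hphi, hphi, show -phiAngle b c - -phiAngle b a = -(phiAngle b c - phiAngle b a) from by abel,
      e2, ← Real.Angle.coe_neg]
    congr 1
    ring
  · rw [hphi, hphi, show -phiAngle c a - -phiAngle c b = -(phiAngle c a - phiAngle c b) from by abel,
      e3, ← Real.Angle.coe_neg]
    congr 1
    ring

theorem angle_sum_helper (P Q R S : Real.Angle) :
    (P - Q) + (R - (P + S)) + ((Q + S) - (R + S) - S) = -(S + S) := by abel

theorem mem_sector_zero {m : ℕ} (hm : 1 ≤ m) : (((0:ℝ)) : Real.Angle) ∈ sector m 0 := by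
  haveI : NeZero (4*m) := ⟨by omega⟩
  rw [mem_sector hm]
  refine ⟨0, by norm_num, fun _ => rfl, ?_⟩
  rw [ZMod.val_zero]
  norm_num

theorem mem_sector_pi {m : ℕ} (hm : 1 ≤ m) :
    (((π:ℝ)) : Real.Angle) ∈ sector m ((2*m:ℕ) : ZMod (4*m)) := by
  haveI : NeZero (4*m) := ⟨by omega⟩
  have hmR : (1:ℝ) ≤ (m:ℝ) := by exact_mod_cast hm
  have hm0 : (m:ℝ) ≠ 0 := by linarith
  rw [mem_sector hm]
  refine ⟨0, by norm_num, fun _ => rfl, ?_⟩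
  rw [ZMod.val_cast_of_lt (by omega : 2*m < 4*m)]
  congr 1
  push_cast
  field_simp
  ring

theorem eq_pi_of_mem_sector_2m {m : ℕ} (hm : 1 ≤ m) {θ : Real.Angle}
    (h : θ ∈ sector m ((2*m:ℕ) : ZMod (4*m))) : θ = ((π:ℝ) : Real.Angle) := by
  haveI : NeZero (4*m) := ⟨by omega⟩
  have hmR : (1:ℝ) ≤ (m:ℝ) := by exact_mod_cast hm
  have hm0 : (m:ℝ) ≠ 0 := by linarith
  rw [mem_sector hm] at h
  obtain ⟨e, he, hpar, rfl⟩ := h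
  rw [ZMod.val_cast_of_lt (by omega : 2*m < 4*m)] at hpar ⊢
  rw [hpar (by rw [Nat.not_odd_iff]; omega)]
  congr 1
  push_cast
  field_simp
  ring

theorem zero_sub_pi : ((0:ℝ) : Real.Angle) - ((π:ℝ) : Real.Angle) = ((π:ℝ) : Real.Angle) := by
  rw [← Real.Angle.coe_sub, show (0:ℝ) - π = -π from by ring, Real.Angle.coe_neg,
    Real.Angle.neg_coe_pi]

theorem ang_sub_self (x : ℝ) : ((x:ℝ) : Real.Angle) - ((x:ℝ) : Real.Angle) = ((0:ℝ) : Real.Angle) := by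
  rw [sub_self, Real.Angle.coe_zero]

theorem pi_sub_zero : ((π:ℝ) : Real.Angle) - ((0:ℝ) : Real.Angle) = ((π:ℝ) : Real.Angle) := by
  rw [Real.Angle.coe_zero, sub_zero]

theorem phi_real {x y : ℝ} (h : x < y) : phiAngle (x:ℂ) (y:ℂ) = ((0:ℝ) : Real.Angle) := by
  unfold phiAngle
  rw [show (y:ℂ) - (x:ℂ) = ((y - x : ℝ):ℂ) from by push_cast; ring,
    Complex.arg_ofReal_of_nonneg (by linarith)]

theorem phi_real' {x y : ℝ} (h : y < x) : phiAngle (x:ℂ) (y:ℂ) = ((π:ℝ) : Real.Angle) := by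
  unfold phiAngle
  rw [show (y:ℂ) - (x:ℂ) = ((y - x : ℝ):ℂ) from by push_cast; ring,
    Complex.arg_ofReal_of_neg (by linarith)]

theorem no_2m {m : ℕ} (hm : 1 ≤ m) {n : ℤ} (h : 2*(m:ℤ) = 4*m*n) : False := by
  have hmZ : (1:ℤ) ≤ (m:ℤ) := by exact_mod_cast hm
  rcases le_or_gt n 0 with hn | hn
  · have h2 : 4*(m:ℤ)*n ≤ 4*(m:ℤ)*0 := mul_le_mul_of_nonneg_left hn (by positivity)
    rw [mul_zero] at h2
    linarith
  · have h2 : 4*(m:ℤ)*1 ≤ 4*(m:ℤ)*n := mul_le_mul_of_nonneg_left hn (by positivity)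
    rw [mul_one] at h2
    linarith

theorem no_6m {m : ℕ} (hm : 1 ≤ m) {n : ℤ} (h : 6*(m:ℤ) = 4*m*n) : False := by
  have hmZ : (1:ℤ) ≤ (m:ℤ) := by exact_mod_cast hm
  rcases le_or_gt n 1 with hn | hn
  · have h2 : 4*(m:ℤ)*n ≤ 4*(m:ℤ)*1 := mul_le_mul_of_nonneg_left hn (by positivity)
    linarith
  · have h2 : 4*(m:ℤ)*2 ≤ 4*(m:ℤ)*n := mul_le_mul_of_nonneg_left hn (by positivity)
    linarith

set_option maxHeartbeats 3000000 in
theorem tri_realize {m : ℕ} (hm : 1 ≤ m) {u v w : ZMod (4*m)} (h : triRel m u v w) :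
    ∃ a b c : ℂ, a ≠ b ∧ b ≠ c ∧ a ≠ c ∧
      phiAngle a b - phiAngle a c ∈ sector m u ∧
      phiAngle b c - phiAngle b a ∈ sector m v ∧
      phiAngle c a - phiAngle c b ∈ sector m w := by
  have hπ := Real.pi_pos
  have hmR : (1:ℝ) ≤ (m:ℝ) := by exact_mod_cast hm
  have hmZ : (1:ℤ) ≤ (m:ℤ) := by exact_mod_cast hm
  have hm0 : (m:ℝ) ≠ 0 := by linarith
  haveI : NeZero (4*m) := ⟨by omega⟩
  obtain ⟨ht, hne, hs1, hs2⟩ := h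
  rw [turn_iff hm] at ht
  obtain ⟨n, d, heq, hd⟩ := ht
  have hxlt : u.val < 4*m := ZMod.val_lt u
  have hylt : v.val < 4*m := ZMod.val_lt v
  have hzlt : w.val < 4*m := ZMod.val_lt w
  rw [sub2m_val hm, mod2m hm hzlt] at heq hd
  have hd' : d = 0 ∨ d = 1 ∨ d = -1 := by
    rcases hd with rfl | ⟨_,_,_,hh⟩
    · exact Or.inl rfl
    · exact Or.inr hh
  by_cases hxz : u.val = 0 ∨ u.val = 2*m
  · -- degenerate (sign 0) case
    have hy0 : v.val = 0 ∨ v.val = 2*m := by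
      unfold signm at hs1; split_ifs at hs1 <;> omega
    have hz0 : w.val = 0 ∨ w.val = 2*m := by
      have hs3 : signm m u = signm m w := hs1.trans hs2
      unfold signm at hs3; split_ifs at hs3 <;> omega
    have hd0 : d = 0 := by
      rcases hd with rfl | ⟨hxo, _, _, _⟩
      · rfl
      · exfalso; rw [Nat.odd_iff] at hxo; omega
    subst hd0
    rcases hxz with hu' | hu' <;> rcases hy0 with hv' | hv' <;> rcases hz0 with hw' | hw'
    · -- (0,0,0) : z' = 2m : contradiction
      exfalso
      rw [hu', hv', hw', if_pos (by omega : 0 < 2*m)] at heq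
      exact no_2m hm (by push_cast at heq; linarith)
    · -- (0,0,2m) : config 3
      have hu2 : u = 0 := by rw [← val_cast_self hm u, hu']; norm_num
      have hv2 : v = 0 := by rw [← val_cast_self hm v, hv']; norm_num
      have hw2 : w = ((2*m:ℕ) : ZMod (4*m)) := by rw [← val_cast_self hm w, hw']
      refine ⟨((0:ℝ):ℂ), ((1:ℝ):ℂ), ((1/2:ℝ):ℂ),
        by exact_mod_cast (by norm_num : (0:ℝ) ≠ 1),
        by exact_mod_cast (by norm_num : (1:ℝ) ≠ 1/2),
        by exact_mod_cast (by norm_num : (0:ℝ) ≠ 1/2), ?_, ?_, ?_⟩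
      · rw [phi_real (by norm_num : (0:ℝ) < 1), phi_real (by norm_num : (0:ℝ) < 1/2),
          ang_sub_self, hu2]
        exact mem_sector_zero hm
      · rw [phi_real' (by norm_num : (1/2:ℝ) < 1), phi_real' (by norm_num : (0:ℝ) < 1),
          ang_sub_self, hv2]
        exact mem_sector_zero hm
      · rw [phi_real' (by norm_num : (0:ℝ) < 1/2), phi_real (by norm_num : (1/2:ℝ) < 1),
          pi_sub_zero, hw2]
        exact mem_sector_pi hm
    · -- (0,2m,0) : config 2
      have hu2 : u = 0 := by rw [← val_cast_self hm u, hu']; norm_num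
      have hv2 : v = ((2*m:ℕ) : ZMod (4*m)) := by rw [← val_cast_self hm v, hv']
      have hw2 : w = 0 := by rw [← val_cast_self hm w, hw']; norm_num
      refine ⟨((0:ℝ):ℂ), ((1:ℝ):ℂ), ((2:ℝ):ℂ),
        by exact_mod_cast (by norm_num : (0:ℝ) ≠ 1),
        by exact_mod_cast (by norm_num : (1:ℝ) ≠ 2),
        by exact_mod_cast (by norm_num : (0:ℝ) ≠ 2), ?_, ?_, ?_⟩
      · rw [phi_real (by norm_num : (0:ℝ) < 1), phi_real (by norm_num : (0:ℝ) < 2),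
          ang_sub_self, hu2]
        exact mem_sector_zero hm
      · rw [phi_real (by norm_num : (1:ℝ) < 2), phi_real' (by norm_num : (0:ℝ) < 1),
          zero_sub_pi, hv2]
        exact mem_sector_pi hm
      · rw [phi_real' (by norm_num : (0:ℝ) < 2), phi_real' (by norm_num : (1:ℝ) < 2),
          ang_sub_self, hw2]
        exact mem_sector_zero hm
    · -- (0,2m,2m) : z' = 0 : sum = 2m : contradiction
      exfalso
      rw [hu', hv', hw', if_neg (by omega : ¬ (2*m < 2*m))] at heq
      rw [Nat.sub_self] at heq
      exact no_2m hm (by push_cast at heq; linarith)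
    · -- (2m,0,0) : z' = 2m : sum = 4m : config 1
      have hu2 : u = ((2*m:ℕ) : ZMod (4*m)) := by rw [← val_cast_self hm u, hu']
      have hv2 : v = 0 := by rw [← val_cast_self hm v, hv']; norm_num
      have hw2 : w = 0 := by rw [← val_cast_self hm w, hw']; norm_num
      refine ⟨((0:ℝ):ℂ), ((1:ℝ):ℂ), ((-1:ℝ):ℂ),
        by exact_mod_cast (by norm_num : (0:ℝ) ≠ 1),
        by exact_mod_cast (by norm_num : (1:ℝ) ≠ -1),
        by exact_mod_cast (by norm_num : (0:ℝ) ≠ -1), ?_, ?_, ?_⟩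
      · rw [phi_real (by norm_num : (0:ℝ) < 1), phi_real' (by norm_num : (-1:ℝ) < 0),
          zero_sub_pi, hu2]
        exact mem_sector_pi hm
      · rw [phi_real' (by norm_num : (-1:ℝ) < 1), phi_real' (by norm_num : (0:ℝ) < 1),
          ang_sub_self, hv2]
        exact mem_sector_zero hm
      · rw [phi_real (by norm_num : (-1:ℝ) < 0), phi_real (by norm_num : (-1:ℝ) < 1),
          ang_sub_self, hw2]
        exact mem_sector_zero hm
    · -- (2m,0,2m) : z' = 0 : sum = 2m : contradiction
      exfalso
      rw [hu', hv', hw', if_neg (by omega : ¬ (2*m < 2*m))] at heq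
      rw [Nat.sub_self] at heq
      exact no_2m hm (by push_cast at heq; linarith)
    · -- (2m,2m,0) : z' = 2m : sum = 6m : contradiction
      exfalso
      rw [hu', hv', hw', if_pos (by omega : 0 < 2*m)] at heq
      exact no_6m hm (by push_cast at heq; linarith)
    · -- (2m,2m,2m) : excluded
      exact absurd ⟨by rw [← val_cast_self hm u, hu'], by rw [← val_cast_self hm v, hv'],
        by rw [← val_cast_self hm w, hw']⟩ hne
  · push_neg at hxz
    obtain ⟨hx0, hx2⟩ := hxz
    set ea : ℝ := -(d:ℝ)/2 with hea
    have heab : -(1:ℝ)/2 ≤ ea ∧ ea ≤ 1/2 := by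
      rcases hd' with rfl | rfl | rfl <;> (rw [hea]; norm_num)
    have heabs : |ea| < 1 := by rw [abs_lt]; constructor <;> linarith [heab.1, heab.2]
    have hdb : (-1:ℤ) ≤ d ∧ d ≤ 1 := by rcases hd' with rfl | rfl | rfl <;> norm_num
    have hodd3 : d ≠ 0 → Odd u.val ∧ Odd v.val ∧ Odd w.val := by
      intro hdne
      rcases hd with rfl | ⟨ho1, ho2, ho3, _⟩
      · exact absurd rfl hdne
      · refine ⟨ho1, ho2, ?_⟩
        rw [Nat.odd_iff] at ho3 ⊢
        split_ifs at ho3 <;> omega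
    have hea0 : ¬ Odd u.val → ea = 0 := by
      intro hh
      rcases hd' with rfl | rfl | rfl
      · rw [hea]; norm_num
      · exact absurd (hodd3 (by norm_num)).1 hh
      · exact absurd (hodd3 (by norm_num)).1 hh
    have heb0 : ¬ Odd v.val → ea = 0 := by
      intro hh
      rcases hd' with rfl | rfl | rfl
      · rw [hea]; norm_num
      · exact absurd (hodd3 (by norm_num)).2.1 hh
      · exact absurd (hodd3 (by norm_num)).2.1 hh
    by_cases hxlt2 : u.val < 2*m
    · -- sign +1 case
      have hy' : v.val ≠ 0 ∧ v.val ≠ 2*m ∧ v.val < 2*m := by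
        unfold signm at hs1; split_ifs at hs1 <;> omega
      have hz' : w.val ≠ 0 ∧ w.val ≠ 2*m ∧ w.val < 2*m := by
        have hs3 : signm m u = signm m w := hs1.trans hs2
        unfold signm at hs3; split_ifs at hs3 <;> omega
      rw [if_pos hz'.2.2] at heq
      push_cast at heq
      have hx1 : (1:ℤ) ≤ (u.val:ℤ) := by exact_mod_cast (by omega : 1 ≤ u.val)
      have hx2' : (u.val:ℤ) + 1 ≤ 2*m := by exact_mod_cast (by omega : u.val + 1 ≤ 2*m)
      have hy1 : (1:ℤ) ≤ (v.val:ℤ) := by exact_mod_cast (by omega : 1 ≤ v.val)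
      have hy2' : (v.val:ℤ) + 1 ≤ 2*m := by exact_mod_cast (by omega : v.val + 1 ≤ 2*m)
      have hz1 : (1:ℤ) ≤ (w.val:ℤ) := by exact_mod_cast (by omega : 1 ≤ w.val)
      have hz2' : (w.val:ℤ) + 1 ≤ 2*m := by exact_mod_cast (by omega : w.val + 1 ≤ 2*m)
      have hn1 : n = 1 := by
        have hP1 : 2*(m:ℤ)+2 ≤ 4*(m:ℤ)*n := by linarith
        have hP2 : 4*(m:ℤ)*n ≤ 8*(m:ℤ) - 2 := by linarith
        rcases lt_trichotomy n 1 with hn | hn | hn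
        · exfalso
          have hn0 : n ≤ 0 := by omega
          have := mul_le_mul_of_nonneg_left hn0 (by positivity : (0:ℤ) ≤ 4*(m:ℤ))
          rw [mul_zero] at this
          linarith
        · exact hn
        · exfalso
          have hn2 : (2:ℤ) ≤ n := by omega
          have := mul_le_mul_of_nonneg_left hn2 (by positivity : (0:ℤ) ≤ 4*(m:ℤ))
          linarith
      rw [hn1] at heq
      have heq' : (u.val:ℤ) + v.val + w.val = 2*m + d := by linarith
      have hsumR : (u.val:ℝ) + (v.val:ℝ) + (w.val:ℝ) = 2*(m:ℝ) + (d:ℝ) := by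
        exact_mod_cast heq'
      have hx1R : (1:ℝ) ≤ (u.val:ℝ) := by exact_mod_cast hx1
      have hx2R : (u.val:ℝ) + 1 ≤ 2*(m:ℝ) := by exact_mod_cast hx2'
      have hy1R : (1:ℝ) ≤ (v.val:ℝ) := by exact_mod_cast hy1
      have hy2R : (v.val:ℝ) + 1 ≤ 2*(m:ℝ) := by exact_mod_cast hy2'
      have hz1R : (1:ℝ) ≤ (w.val:ℝ) := by exact_mod_cast hz1
      have hz2R : (w.val:ℝ) + 1 ≤ 2*(m:ℝ) := by exact_mod_cast hz2'
      have h4m : (0:ℝ) < 4*(m:ℝ) := by linarith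
      have ha1 : 0 < 2*π*((u.val:ℝ)+ea)/(4*(m:ℝ)) :=
        div_pos (mul_pos (by linarith : (0:ℝ) < 2*π)
          (by linarith [heab.1] : (0:ℝ) < (u.val:ℝ)+ea)) h4m
      have ha2 : 2*π*((u.val:ℝ)+ea)/(4*(m:ℝ)) < π := by
        rw [div_lt_iff₀ h4m]
        nlinarith [mul_pos (show (0:ℝ) < 2*π from by linarith)
          (show (0:ℝ) < 2*(m:ℝ) - ((u.val:ℝ)+ea) from by linarith [heab.2])]
      have hb1 : 0 < 2*π*((v.val:ℝ)+ea)/(4*(m:ℝ)) :=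
        div_pos (mul_pos (by linarith : (0:ℝ) < 2*π)
          (by linarith [heab.1] : (0:ℝ) < (v.val:ℝ)+ea)) h4m
      have hb2 : 2*π*((v.val:ℝ)+ea)/(4*(m:ℝ)) < π := by
        rw [div_lt_iff₀ h4m]
        nlinarith [mul_pos (show (0:ℝ) < 2*π from by linarith)
          (show (0:ℝ) < 2*(m:ℝ) - ((v.val:ℝ)+ea) from by linarith [heab.2])]
      have hc1 : 0 < 2*π*((w.val:ℝ)+0)/(4*(m:ℝ)) :=
        div_pos (mul_pos (by linarith : (0:ℝ) < 2*π)
          (by linarith : (0:ℝ) < (w.val:ℝ)+0)) h4m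
      have hc2 : 2*π*((w.val:ℝ)+0)/(4*(m:ℝ)) < π := by
        rw [div_lt_iff₀ h4m]
        nlinarith [mul_pos (show (0:ℝ) < 2*π from by linarith)
          (show (0:ℝ) < 2*(m:ℝ) - ((w.val:ℝ)+0) from by linarith)]
      have hsum : 2*π*((u.val:ℝ)+ea)/(4*(m:ℝ)) + 2*π*((v.val:ℝ)+ea)/(4*(m:ℝ))
          + 2*π*((w.val:ℝ)+0)/(4*(m:ℝ)) = π := by
        rw [show 2*π*((u.val:ℝ)+ea)/(4*(m:ℝ)) + 2*π*((v.val:ℝ)+ea)/(4*(m:ℝ))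
            + 2*π*((w.val:ℝ)+0)/(4*(m:ℝ))
            = 2*π*(((u.val:ℝ)+(v.val:ℝ)+(w.val:ℝ)) + 2*ea)/(4*(m:ℝ)) from by ring]
        rw [show ((u.val:ℝ)+(v.val:ℝ)+(w.val:ℝ)) + 2*ea = 2*(m:ℝ) from by
          rw [hea]; linarith [hsumR]]
        field_simp
        ring
      obtain ⟨a, b, c, hab, hbc, hac, e1, e2, e3⟩ :=
        tri_pos ha1 ha2 hb1 hb2 hc1 hc2 hsum
      refine ⟨a, b, c, hab, hbc, hac, ?_, ?_, ?_⟩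
      · rw [e1, mem_sector hm]
        exact ⟨ea, heabs, hea0, rfl⟩
      · rw [e2, mem_sector hm]
        exact ⟨ea, heabs, heb0, rfl⟩
      · rw [e3, mem_sector hm]
        exact ⟨0, by norm_num, fun _ => rfl, rfl⟩
    · -- sign -1 case
      have hy' : v.val ≠ 0 ∧ v.val ≠ 2*m ∧ ¬ (v.val < 2*m) := by
        unfold signm at hs1; split_ifs at hs1 <;> omega
      have hz' : w.val ≠ 0 ∧ w.val ≠ 2*m ∧ ¬ (w.val < 2*m) := by
        have hs3 : signm m u = signm m w := hs1.trans hs2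
        unfold signm at hs3; split_ifs at hs3 <;> omega
      rw [if_neg hz'.2.2] at heq
      push_cast [Nat.cast_sub (by omega : 2*m ≤ w.val)] at heq
      have hx1 : 2*(m:ℤ) + 1 ≤ (u.val:ℤ) := by exact_mod_cast (by omega : 2*m + 1 ≤ u.val)
      have hx2' : (u.val:ℤ) + 1 ≤ 4*m := by exact_mod_cast (by omega : u.val + 1 ≤ 4*m)
      have hy1 : 2*(m:ℤ) + 1 ≤ (v.val:ℤ) := by exact_mod_cast (by omega : 2*m + 1 ≤ v.val)
      have hy2' : (v.val:ℤ) + 1 ≤ 4*m := by exact_mod_cast (by omega : v.val + 1 ≤ 4*m)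
      have hz1 : 2*(m:ℤ) + 1 ≤ (w.val:ℤ) := by exact_mod_cast (by omega : 2*m + 1 ≤ w.val)
      have hz2' : (w.val:ℤ) + 1 ≤ 4*m := by exact_mod_cast (by omega : w.val + 1 ≤ 4*m)
      have hn2 : n = 2 := by
        have hP1 : 4*(m:ℤ)+2 ≤ 4*(m:ℤ)*n := by linarith
        have hP2 : 4*(m:ℤ)*n ≤ 10*(m:ℤ) - 2 := by linarith
        rcases lt_trichotomy n 2 with hn | hn | hn
        · exfalso
          have hn0 : n ≤ 1 := by omega
          have := mul_le_mul_of_nonneg_left hn0 (by positivity : (0:ℤ) ≤ 4*(m:ℤ))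
          rw [mul_one] at this
          linarith
        · exact hn
        · exfalso
          have hn3 : (3:ℤ) ≤ n := by omega
          have := mul_le_mul_of_nonneg_left hn3 (by positivity : (0:ℤ) ≤ 4*(m:ℤ))
          linarith
      rw [hn2] at heq
      have heq' : (u.val:ℤ) + v.val + w.val = 10*m + d := by linarith
      have hsumR : (u.val:ℝ) + (v.val:ℝ) + (w.val:ℝ) = 10*(m:ℝ) + (d:ℝ) := by
        exact_mod_cast heq'
      have hx1R : 2*(m:ℝ) + 1 ≤ (u.val:ℝ) := by exact_mod_cast hx1
      have hx2R : (u.val:ℝ) + 1 ≤ 4*(m:ℝ) := by exact_mod_cast hx2'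
      have hy1R : 2*(m:ℝ) + 1 ≤ (v.val:ℝ) := by exact_mod_cast hy1
      have hy2R : (v.val:ℝ) + 1 ≤ 4*(m:ℝ) := by exact_mod_cast hy2'
      have hz1R : 2*(m:ℝ) + 1 ≤ (w.val:ℝ) := by exact_mod_cast hz1
      have hz2R : (w.val:ℝ) + 1 ≤ 4*(m:ℝ) := by exact_mod_cast hz2'
      have h4m : (0:ℝ) < 4*(m:ℝ) := by linarith
      have hlow : ∀ x : ℝ, 2*(m:ℝ) + 1/2 ≤ x → -π < 2*π*x/(4*(m:ℝ)) - 2*π := by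
        intro x hx
        have hA : π < 2*π*x/(4*(m:ℝ)) := by
          rw [lt_div_iff₀ h4m]
          nlinarith [mul_pos (show (0:ℝ) < 2*π from by linarith)
            (show (0:ℝ) < x - 2*(m:ℝ) from by linarith)]
        linarith
      have hhigh : ∀ x : ℝ, x ≤ 4*(m:ℝ) - 1/2 → 2*π*x/(4*(m:ℝ)) - 2*π < 0 := by
        intro x hx
        have hA : 2*π*x/(4*(m:ℝ)) < 2*π := by
          rw [div_lt_iff₀ h4m]
          nlinarith [mul_pos (show (0:ℝ) < 2*π from by linarith)
            (show (0:ℝ) < 4*(m:ℝ) - x from by linarith)]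
        linarith
      have ha1 : -π < 2*π*((u.val:ℝ)+ea)/(4*(m:ℝ)) - 2*π := hlow _ (by linarith [heab.1])
      have ha2 : 2*π*((u.val:ℝ)+ea)/(4*(m:ℝ)) - 2*π < 0 := hhigh _ (by linarith [heab.2])
      have hb1 : -π < 2*π*((v.val:ℝ)+ea)/(4*(m:ℝ)) - 2*π := hlow _ (by linarith [heab.1])
      have hb2 : 2*π*((v.val:ℝ)+ea)/(4*(m:ℝ)) - 2*π < 0 := hhigh _ (by linarith [heab.2])
      have hc1 : -π < 2*π*((w.val:ℝ)+0)/(4*(m:ℝ)) - 2*π := hlow _ (by linarith)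
      have hc2 : 2*π*((w.val:ℝ)+0)/(4*(m:ℝ)) - 2*π < 0 := hhigh _ (by linarith)
      have hsum : (2*π*((u.val:ℝ)+ea)/(4*(m:ℝ)) - 2*π) + (2*π*((v.val:ℝ)+ea)/(4*(m:ℝ)) - 2*π)
          + (2*π*((w.val:ℝ)+0)/(4*(m:ℝ)) - 2*π) = -π := by
        rw [show (2*π*((u.val:ℝ)+ea)/(4*(m:ℝ)) - 2*π) + (2*π*((v.val:ℝ)+ea)/(4*(m:ℝ)) - 2*π)
            + (2*π*((w.val:ℝ)+0)/(4*(m:ℝ)) - 2*π)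
            = 2*π*(((u.val:ℝ)+(v.val:ℝ)+(w.val:ℝ)) + 2*ea)/(4*(m:ℝ)) - 6*π from by ring]
        rw [show ((u.val:ℝ)+(v.val:ℝ)+(w.val:ℝ)) + 2*ea = 10*(m:ℝ) from by
          rw [hea]; linarith [hsumR]]
        field_simp
        ring
      obtain ⟨a, b, c, hab, hbc, hac, e1, e2, e3⟩ :=
        tri_neg ha1 ha2 hb1 hb2 hc1 hc2 hsum
      have hco : ∀ x : ℝ, ((x - 2*π : ℝ) : Real.Angle) = ((x:ℝ) : Real.Angle) := by
        intro x
        rw [Real.Angle.coe_sub, Real.Angle.coe_two_pi, sub_zero]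
      refine ⟨a, b, c, hab, hbc, hac, ?_, ?_, ?_⟩
      · rw [e1, hco, mem_sector hm]
        exact ⟨ea, heabs, hea0, rfl⟩
      · rw [e2, hco, mem_sector hm]
        exact ⟨ea, heabs, heb0, rfl⟩
      · rw [e3, hco, mem_sector hm]
        exact ⟨0, by norm_num, fun _ => rfl, rfl⟩

end Stmt17

set_option maxHeartbeats 2000000 in
/-- composition of distinct-position relations via turns and triangles. -/
theorem stmt17 (m : ℕ) (hm : 1 ≤ m) (i j k l s t : ZMod (4*m)) :
    (∃ A B C : OPoint, oprarel m i j A B ∧ oprarel m k l B C ∧ oprarel m s t A C) ↔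
      ∃ u v w : ZMod (4*m),
        turnRel m u (-i) s ∧ turnRel m v (-k) j ∧ turnRel m w (-t) l ∧
        triRel m u v w := by
  constructor
  · rintro ⟨A, B, C, ⟨hab, hA1, hB1⟩, ⟨hbc, hB2, hC2⟩, ⟨hac, hA2, hC1⟩⟩
    have hba0 : B.1 - A.1 ≠ 0 := sub_ne_zero.mpr (Ne.symm hab)
    have hca0 : C.1 - A.1 ≠ 0 := sub_ne_zero.mpr (Ne.symm hac)
    have hcb0 : C.1 - B.1 ≠ 0 := sub_ne_zero.mpr (Ne.symm hbc)
    obtain ⟨u, hu⟩ := Stmt17.exists_sector hm (phiAngle A.1 B.1 - phiAngle A.1 C.1)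
    obtain ⟨v, hv⟩ := Stmt17.exists_sector hm (phiAngle B.1 C.1 - phiAngle B.1 A.1)
    obtain ⟨w, hw⟩ := Stmt17.exists_sector hm (phiAngle C.1 A.1 - phiAngle C.1 B.1)
    refine ⟨u, v, w, ?_, ?_, ?_, ?_⟩
    · exact Stmt17.turn_of_sum hm hu (Stmt17.neg_mem hm hA1) hA2 (by abel)
    · exact Stmt17.turn_of_sum hm hv (Stmt17.neg_mem hm hB2) hB1 (by abel)
    · exact Stmt17.turn_of_sum hm hw (Stmt17.neg_mem hm hC1) hC2 (by abel)
    refine ⟨?_, ?_, ?_, ?_⟩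
    · apply Stmt17.turn_of_sum hm hu hv (Stmt17.sub_pi_mem hm hw)
      have h1 : phiAngle B.1 A.1 = phiAngle A.1 B.1 + ((π:ℝ) : Real.Angle) := by
        unfold phiAngle
        rw [show A.1 - B.1 = -(B.1 - A.1) from by ring, Complex.arg_neg_coe_angle hba0]
      have h2 : phiAngle C.1 B.1 = phiAngle B.1 C.1 + ((π:ℝ) : Real.Angle) := by
        unfold phiAngle
        rw [show B.1 - C.1 = -(C.1 - B.1) from by ring, Complex.arg_neg_coe_angle hcb0]
      have h3 : phiAngle C.1 A.1 = phiAngle A.1 C.1 + ((π:ℝ) : Real.Angle) := by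
        unfold phiAngle
        rw [show A.1 - C.1 = -(C.1 - A.1) from by ring, Complex.arg_neg_coe_angle hca0]
      rw [h1, h2, h3, Stmt17.angle_sum_helper, Real.Angle.coe_pi_add_coe_pi, neg_zero]
    · rintro ⟨hu2, hv2, hw2⟩
      rw [hu2] at hu
      rw [hv2] at hv
      exact Stmt17.not_all_pi hab hbc hac (Stmt17.eq_pi_of_mem_sector_2m hm hu)
        (Stmt17.eq_pi_of_mem_sector_2m hm hv)
    · rw [← Stmt17.angsign_eq hm hu, ← Stmt17.angsign_eq hm hv]
      exact Stmt17.angsign_tri₁ hab hbc hac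
    · rw [← Stmt17.angsign_eq hm hv, ← Stmt17.angsign_eq hm hw]
      exact Stmt17.angsign_tri₂ hab hbc hac
  · rintro ⟨u, v, w, h1, h2, h3, htri⟩
    obtain ⟨a, b, c, hab, hbc, hac, hu, hv, hw⟩ := Stmt17.tri_realize hm htri
    obtain ⟨β, γ, hβ, hγ, hsum1⟩ := Stmt17.sum_of_turn hm h1 hu
    obtain ⟨β', γ', hβ', hγ', hsum2⟩ := Stmt17.sum_of_turn hm h2 hv
    obtain ⟨β'', γ'', hβ'', hγ'', hsum3⟩ := Stmt17.sum_of_turn hm h3 hw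
    have mk : ∀ (X Y B' G' : Real.Angle), (X - Y) + B' + G' = 0 → Y - (X + B') = G' := by
      intro X Y B' G' hsum'
      have h' : Y - (X + B') - G' = -((X - Y) + B' + G') := by abel
      exact eq_of_sub_eq_zero (by rw [h', hsum', neg_zero])
    refine ⟨(a, phiAngle a b + β), (b, phiAngle b c + β'), (c, phiAngle c a + β''),
      ⟨hab, ?_, ?_⟩, ⟨hbc, ?_, ?_⟩, ⟨hac, ?_, ?_⟩⟩
    · show phiAngle a b - (phiAngle a b + β) ∈ sector m i
      rw [show phiAngle a b - (phiAngle a b + β) = -β from by abel]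
      have hn := Stmt17.neg_mem hm hβ
      rwa [neg_neg] at hn
    · show phiAngle b a - (phiAngle b c + β') ∈ sector m j
      rw [mk _ _ _ _ hsum2]
      exact hγ'
    · show phiAngle b c - (phiAngle b c + β') ∈ sector m k
      rw [show phiAngle b c - (phiAngle b c + β') = -β' from by abel]
      have hn := Stmt17.neg_mem hm hβ'
      rwa [neg_neg] at hn
    · show phiAngle c b - (phiAngle c a + β'') ∈ sector m l
      rw [mk _ _ _ _ hsum3]
      exact hγ''
    · show phiAngle a c - (phiAngle a b + β) ∈ sector m s
      rw [mk _ _ _ _ hsum1]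
      exact hγ
    · show phiAngle c a - (phiAngle c a + β'') ∈ sector m t
      rw [show phiAngle c a - (phiAngle c a + β'') = -β'' from by abel]
      have hn := Stmt17.neg_mem hm hβ''
      rwa [neg_neg] at hn
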